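/- Let P ⊂ ℝ^d be a d-dimensional weakly neighbourly antipodal convex polytope with v vertices. Then v ≤ X(P), where X(P) is the X-ray number of P. -/

import Mathlib

open scoped RealInnerProductSpace

def IsXRayed {d : ℕ} (K : Set (EuclideanSpace ℝ (Fin d)))
    (v p : EuclideanSpace ℝ (Fin d)) : Prop :=
  ∃ t : ℝ, p + t • v ∈ interior K

noncomputable def xrayNumber {d : ℕ} (K : Set (EuclideanSpace ℝ (Fin d))) : ℕ :=
  sInf {n | ∃ D : Finset (EuclideanSpace ℝ (Fin d)), D.card = n ∧ (∀ v ∈ D, v ≠ 0) ∧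
    ∀ p ∈ K, ∃ v ∈ D, IsXRayed K v p}

def IsFaceOf {d : ℕ} (K F : Set (EuclideanSpace ℝ (Fin d))) : Prop :=
  ∃ (n : EuclideanSpace ℝ (Fin d)) (c : ℝ), n ≠ 0 ∧ (∀ x ∈ K, ⟪n, x⟫ ≤ c) ∧
    (∃ x ∈ K, ⟪n, x⟫ = c) ∧ F = {x ∈ K | ⟪n, x⟫ = c}

/-- If `n ≠ 0` and `⟪n, ·⟫ ≤ c` on `P`, then the inequality is strict on the interior. -/
lemma inner_lt_of_mem_interior {d : ℕ} {P : Set (EuclideanSpace ℝ (Fin d))}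
    {n : EuclideanSpace ℝ (Fin d)} {c : ℝ} (hn : n ≠ 0)
    (hle : ∀ y ∈ P, ⟪n, y⟫ ≤ c) {x : EuclideanSpace ℝ (Fin d)}
    (hx : x ∈ interior P) : ⟪n, x⟫ < c := by
  obtain ⟨ε, hε, hball⟩ := Metric.isOpen_iff.mp isOpen_interior x hx
  have hnorm : (0:ℝ) < ‖n‖ := norm_pos_iff.mpr hn
  set δ : ℝ := ε / (2 * ‖n‖) with hδ
  have hδpos : 0 < δ := by positivity
  have hmem : x + δ • n ∈ P := by
    apply interior_subset
    apply hball
    rw [Metric.mem_ball, dist_eq_norm]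
    have : x + δ • n - x = δ • n := by abel
    rw [this, norm_smul, Real.norm_eq_abs, abs_of_pos hδpos]
    have h : δ * ‖n‖ = ε / 2 := by rw [hδ]; field_simp
    rw [h]; linarith
  have h2 := hle _ hmem
  rw [inner_add_right, real_inner_smul_right] at h2
  have hip : (0:ℝ) < ⟪n, n⟫ := by rw [real_inner_self_eq_norm_sq]; positivity
  have : 0 < δ * ⟪n, n⟫ := mul_pos hδpos hip
  linarith

theorem card_vertices_le_xray_of_wn_antipodal {d : ℕ}
    (P : Set (EuclideanSpace ℝ (Fin d))) (V : Finset (EuclideanSpace ℝ (Fin d)))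
    (hP : P = convexHull ℝ (V : Set (EuclideanSpace ℝ (Fin d))))
    (hV : (V : Set (EuclideanSpace ℝ (Fin d))) = Set.extremePoints ℝ P)
    (hfull : (interior P).Nonempty)
    (hwn : ∀ u ∈ V, ∀ w ∈ V, ∃ F, IsFaceOf P F ∧ u ∈ F ∧ w ∈ F)
    (hap : ∀ u ∈ V, ∀ w ∈ V, u ≠ w → ∃ n : EuclideanSpace ℝ (Fin d), n ≠ 0 ∧
      (∀ x ∈ P, ⟪n, x⟫ ≤ ⟪n, u⟫) ∧ (∀ x ∈ P, ⟪n, w⟫ ≤ ⟪n, x⟫) ∧ ⟪n, u⟫ ≠ ⟪n, w⟫) :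
    V.card ≤ xrayNumber P := by
  classical
  have hconv : Convex ℝ P := hP ▸ convex_convexHull ℝ _
  have hVP : ∀ u ∈ V, u ∈ P := by
    intro u hu
    rw [hP]
    exact subset_convexHull ℝ _ hu
  obtain ⟨q, hq⟩ := hfull
  -- V is nonempty
  have hVne : V.Nonempty := by
    rcases V.eq_empty_or_nonempty with h | h
    · exfalso
      rw [hP, h] at hq
      simp at hq
    · exact h
  -- get a nonzero vector from a face
  obtain ⟨u₀, hu₀⟩ := hVne
  obtain ⟨F₀, ⟨n₀, c₀, hn₀, _⟩, _, _⟩ := hwn u₀ hu₀ u₀ hu₀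
  -- interior points are not vertices
  have hqV : ∀ u ∈ V, q ≠ u := by
    intro u hu hqu
    have huint : u ∈ interior P := hqu ▸ hq
    have hext : u ∈ Set.extremePoints ℝ P := by
      rw [← hV]; exact_mod_cast hu
    obtain ⟨ε, hε, hball⟩ := Metric.isOpen_iff.mp isOpen_interior u huint
    have hnorm : (0:ℝ) < ‖n₀‖ := norm_pos_iff.mpr hn₀
    set δ : ℝ := ε / (2 * ‖n₀‖) with hδ
    have hδpos : 0 < δ := by positivity
    have hdn : ‖δ • n₀‖ < ε := by
      rw [norm_smul, Real.norm_eq_abs, abs_of_pos hδpos]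
      have h : δ * ‖n₀‖ = ε / 2 := by rw [hδ]; field_simp
      rw [h]; linarith
    have h1 : u - δ • n₀ ∈ P := by
      apply interior_subset; apply hball
      rw [Metric.mem_ball, dist_eq_norm]
      have : u - δ • n₀ - u = -(δ • n₀) := by abel
      rw [this, norm_neg]; exact hdn
    have h2 : u + δ • n₀ ∈ P := by
      apply interior_subset; apply hball
      rw [Metric.mem_ball, dist_eq_norm]
      have : u + δ • n₀ - u = δ • n₀ := by abel
      rw [this]; exact hdn
    have hseg : u ∈ openSegment ℝ (u - δ • n₀) (u + δ • n₀) := by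
      refine ⟨1/2, 1/2, by norm_num, by norm_num, by norm_num, ?_⟩
      module
    have := (mem_extremePoints.mp hext).2 _ h1 _ h2 hseg
    have h3 : u - δ • n₀ = u := this.1
    have : δ • n₀ = 0 := by
      have := sub_eq_self.mp h3
      exact this
    exact hn₀ (by simpa [smul_eq_zero, ne_of_gt hδpos] using this)
  -- the defining set of xrayNumber is nonempty
  have hSne : {n | ∃ D : Finset (EuclideanSpace ℝ (Fin d)), D.card = n ∧ (∀ v ∈ D, v ≠ 0) ∧
      ∀ p ∈ P, ∃ v ∈ D, IsXRayed P v p}.Nonempty := by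
    refine ⟨(V.image (fun u => q - u)).card, V.image (fun u => q - u), rfl, ?_, ?_⟩
    · intro v hv
      obtain ⟨u, hu, rfl⟩ := Finset.mem_image.mp hv
      exact sub_ne_zero.mpr (hqV u hu)
    · intro p hp
      rw [hP, Finset.convexHull_eq] at hp
      obtain ⟨w, hw₀, hw₁, hwc⟩ := hp
      have hex : ∃ u ∈ V, 0 < w u := by
        by_contra h
        push_neg at h
        have : ∑ y ∈ V, w y ≤ 0 := Finset.sum_nonpos h
        linarith
      obtain ⟨u, hu, hwu⟩ := hex
      refine ⟨q - u, Finset.mem_image_of_mem _ hu, w u, ?_⟩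
      have hpsum : p = ∑ y ∈ V, w y • y := by
        rw [← hwc, Finset.centerMass_eq_of_sum_1 _ _ hw₁]
        simp
      have hsplit : ∑ y ∈ V, w y • y = w u • u + ∑ y ∈ V.erase u, w y • y :=
        (Finset.add_sum_erase V _ hu).symm
      have hkey : p + w u • (q - u) = w u • q + ∑ y ∈ V.erase u, w y • y := by
        rw [hpsum, hsplit, smul_sub]
        abel
      have hsum_erase : ∑ y ∈ V.erase u, w y = 1 - w u := by
        have := Finset.add_sum_erase V w hu
        linarith
      rw [hkey]
      have hnn : (0:ℝ) ≤ ∑ y ∈ V.erase u, w y :=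
        Finset.sum_nonneg fun y hy => hw₀ y (Finset.mem_of_mem_erase hy)
      rcases eq_or_lt_of_le hnn with heq | hlt
      · have hz : ∀ y ∈ V.erase u, w y = 0 :=
          (Finset.sum_eq_zero_iff_of_nonneg
            (fun y hy => hw₀ y (Finset.mem_of_mem_erase hy))).mp heq.symm
        have hsz : ∑ y ∈ V.erase u, w y • y = 0 :=
          Finset.sum_eq_zero fun y hy => by rw [hz y hy, zero_smul]
        have hwu1 : w u = 1 := by rw [← heq] at hsum_erase; linarith
        rw [hsz, hwu1, one_smul, add_zero]
        exact hq
      · set m := (V.erase u).centerMass w id with hm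
        have hmP : m ∈ P := by
          rw [hP]
          exact Finset.centerMass_mem_convexHull _
            (fun y hy => hw₀ y (Finset.mem_of_mem_erase hy)) hlt
            (fun y hy => Finset.mem_coe.mpr (Finset.mem_of_mem_erase hy))
        have hms : ∑ y ∈ V.erase u, w y • y = (1 - w u) • m := by
          rw [hm, Finset.centerMass, smul_smul, hsum_erase,
            mul_inv_cancel₀ (by linarith : (1:ℝ) - w u ≠ 0), one_smul]
          simp
        rw [hms]
        exact hconv.combo_interior_self_mem_interior hq hmP hwu
          (by linarith) (by ring)
  -- main counting argument
  rw [xrayNumber]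
  refine le_csInf hSne ?_
  rintro n ⟨D, rfl, hDnz, hDcov⟩
  have hch : ∀ u ∈ V, ∃ v ∈ D, IsXRayed P v u := fun u hu => hDcov u (hVP u hu)
  choose! f hfD hfX using hch
  refine Finset.card_le_card_of_injOn f hfD ?_
  intro u hu w hw hfeq
  by_contra huw
  obtain ⟨t, ht⟩ := hfX u (by exact_mod_cast hu)
  obtain ⟨s, hs⟩ := hfX w (by exact_mod_cast hw)
  rw [hfeq] at ht
  set v := f w with hv
  obtain ⟨F, ⟨n, c, hn, hnle, -, hFeq⟩, huF, hwF⟩ :=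
    hwn u (by exact_mod_cast hu) w (by exact_mod_cast hw)
  rw [hFeq] at huF hwF
  obtain ⟨-, hcu⟩ := huF
  obtain ⟨-, hcw⟩ := hwF
  have h1 : ⟪n, u + t • v⟫ < c := inner_lt_of_mem_interior hn hnle ht
  have h2 : ⟪n, w + s • v⟫ < c := inner_lt_of_mem_interior hn hnle hs
  rw [inner_add_right, real_inner_smul_right, hcu] at h1
  rw [inner_add_right, real_inner_smul_right, hcw] at h2
  have hta : t * ⟪n, v⟫ < 0 := by linarith
  have hsa : s * ⟪n, v⟫ < 0 := by linarith
  obtain ⟨n', hn', hup, hlo, -⟩ :=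
    hap u (by exact_mod_cast hu) w (by exact_mod_cast hw) huw
  have h3 : ⟪n', u + t • v⟫ < ⟪n', u⟫ := inner_lt_of_mem_interior hn' hup ht
  rw [inner_add_right, real_inner_smul_right] at h3
  have htb : t * ⟪n', v⟫ < 0 := by linarith
  have hlo' : ∀ x ∈ P, ⟪-n', x⟫ ≤ -⟪n', w⟫ := by
    intro x hx
    rw [inner_neg_left]
    have := hlo x hx
    linarith
  have h4 : ⟪-n', w + s • v⟫ < -⟪n', w⟫ :=
    inner_lt_of_mem_interior (neg_ne_zero.mpr hn') hlo' hs
  rw [inner_neg_left, inner_add_right, real_inner_smul_right] at h4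
  have hsb : 0 < s * ⟪n', v⟫ := by linarith
  have hX : (t * ⟪n, v⟫) * (s * ⟪n', v⟫) < 0 := mul_neg_of_neg_of_pos hta hsb
  have hY : (0:ℝ) < (s * ⟪n, v⟫) * (t * ⟪n', v⟫) := mul_pos_of_neg_of_neg hsa htb
  nlinarith [hX, hY]
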